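/- Let H be a real inner product space with dim H ≥ 3, and let ξ, η be unit vectors in H with η ≠ ξ and η ≠ −ξ. Then there exist a natural number k ≥ 1 and a unit vector η′ in H such that ⟪ξ, η′⟫ = ⟪ξ, η⟫ and ⟪η, η′⟫ = cos(π / 2^k). -/

import Mathlib

set_option maxHeartbeats 1000000


open RealInnerProductSpace Real

theorem exists_dyadic_angle_vector
    {H : Type*} [NormedAddCommGroup H] [InnerProductSpace ℝ H]
    (hdim : 3 ≤ Module.rank ℝ H)
    (ξ η : H) (hξ : ‖ξ‖ = 1) (hη : ‖η‖ = 1)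
    (h1 : η ≠ ξ) (h2 : η ≠ -ξ) :
    ∃ k : ℕ, 1 ≤ k ∧ ∃ η' : H, ‖η'‖ = 1 ∧
      ⟪ξ, η'⟫ = ⟪ξ, η⟫ ∧ ⟪η, η'⟫ = Real.cos (π / 2 ^ k) := by
  have key : ∀ x y : H, ‖x‖ = 1 → ‖y‖ = 1 → y ≠ x → ⟪x, y⟫ < 1 := by
    intro x y hx hy hne
    rcases lt_or_eq_of_le (real_inner_le_norm x y) with h | h
    · simpa [hx, hy] using h
    · exact absurd ((inner_eq_one_iff_of_norm_eq_one hx hy).mp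
        (by rw [h, hx, hy]; ring)).symm hne
  set c : ℝ := ⟪ξ, η⟫ with hcdef
  have hc1 : c < 1 := key ξ η hξ hη h1
  have hcm1 : -1 < c := by
    have := key (-ξ) η (by simp [hξ]) hη (by simpa using h2)
    rw [inner_neg_left] at this
    linarith
  have hc2 : 0 < 1 - c ^ 2 := by nlinarith
  set s : ℝ := Real.sqrt (1 - c ^ 2) with hsdef
  have hs2 : s ^ 2 = 1 - c ^ 2 := Real.sq_sqrt hc2.le
  have hspos : 0 < s := Real.sqrt_pos.mpr hc2
  set v : H := η - c • ξ with hvdef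
  have hξξ : ⟪ξ, ξ⟫ = (1 : ℝ) := by
    rw [real_inner_self_eq_norm_sq, hξ]; norm_num
  have hηξ : ⟪η, ξ⟫ = c := by rw [real_inner_comm]
  have hξv : ⟪ξ, v⟫ = 0 := by
    simp [hvdef, inner_sub_right, inner_smul_right, hξξ, ← hcdef, hξ]
  have hηv : ⟪η, v⟫ = 1 - c ^ 2 := by
    rw [hvdef, inner_sub_right, inner_smul_right, hηξ,
      real_inner_self_eq_norm_sq, hη]
    ring
  -- find a unit vector orthogonal to both ξ and η
  set K : Submodule ℝ H := Submodule.span ℝ ({ξ, η} : Set H) with hKdef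
  have hKfin : FiniteDimensional ℝ K :=
    FiniteDimensional.span_of_finite ℝ (Set.toFinite _)
  have hKne : Kᗮ ≠ ⊥ := by
    intro hbot
    have hKtop : K = ⊤ := by
      have h := (Submodule.isCompl_orthogonal_of_hasOrthogonalProjection (K := K)).sup_eq_top
      rwa [hbot, sup_bot_eq] at h
    have hr : Module.rank ℝ H ≤ 2 := by
      have h := rank_span_le (R := ℝ) ({ξ, η} : Set H)
      rw [← hKdef, hKtop, rank_top] at h
      refine h.trans ?_
      have h2' : (Cardinal.mk ({ξ, η} : Set H)) ≤ (Cardinal.mk ({η} : Set H)) + 1 :=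
        Cardinal.mk_insert_le
      rw [Cardinal.mk_singleton] at h2'
      exact h2'.trans_eq one_add_one_eq_two
    have h32 : (3 : Cardinal) ≤ 2 := hdim.trans hr
    have h23 : (2 : Cardinal) < 3 := by norm_cast
    exact absurd h32 h23.not_ge
  obtain ⟨w₀, hw₀K, hw₀ne⟩ := (Submodule.ne_bot_iff _).mp hKne
  set w : H := ‖w₀‖⁻¹ • w₀ with hwdef
  have hwnorm : ‖w‖ = 1 := norm_smul_inv_norm hw₀ne
  have hξw : ⟪ξ, w⟫ = 0 := by
    rw [hwdef, real_inner_smul_right,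
      hw₀K ξ (Submodule.subset_span (by simp)), mul_zero]
  have hηw : ⟪η, w⟫ = 0 := by
    rw [hwdef, real_inner_smul_right,
      hw₀K η (Submodule.subset_span (by simp)), mul_zero]
  have hvw : ⟪v, w⟫ = 0 := by
    rw [hvdef, inner_sub_left, real_inner_smul_left, hξw, hηw]
    ring
  -- choose k
  obtain ⟨k₀, hk₀⟩ := pow_unbounded_of_one_lt (π / (2 * s)) (one_lt_two (α := ℝ))
  set k : ℕ := max k₀ 1 with hkdef
  have hk1 : 1 ≤ k := le_max_right _ _
  have hπk : π / 2 ^ k ≤ 2 * s := by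
    have h2k : (2 : ℝ) ^ k₀ ≤ 2 ^ k :=
      pow_le_pow_right₀ one_le_two (le_max_left _ _)
    have hlt : π / (2 * s) < 2 ^ k := lt_of_lt_of_le hk₀ h2k
    have hp : (0 : ℝ) < 2 ^ k := by positivity
    rw [div_le_iff₀ hp]
    rw [div_lt_iff₀ (by positivity)] at hlt
    linarith
  have hcosge : 2 * c ^ 2 - 1 ≤ Real.cos (π / 2 ^ k) := by
    have h := Real.one_sub_sq_div_two_le_cos (x := π / 2 ^ k)
    have hnn : 0 ≤ π / 2 ^ k := by positivity
    nlinarith [sq_nonneg (π / 2 ^ k)]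
  have hcosle : Real.cos (π / 2 ^ k) ≤ 1 := Real.cos_le_one _
  set t : ℝ := (Real.cos (π / 2 ^ k) - c ^ 2) / (1 - c ^ 2) with htdef
  have ht1 : t ≤ 1 := by
    rw [htdef, div_le_one hc2]; linarith
  have htm1 : -1 ≤ t := by
    rw [htdef, le_div_iff₀ hc2]; nlinarith
  have hθ : Real.cos (Real.arccos t) = t := Real.cos_arccos htm1 ht1
  set θ : ℝ := Real.arccos t
  refine ⟨k, hk1, c • ξ + Real.cos θ • v + (s * Real.sin θ) • w, ?_, ?_, ?_⟩
  · -- norm 1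
    have hvξ : ⟪v, ξ⟫ = 0 := by rw [real_inner_comm]; exact hξv
    have hwξ : ⟪w, ξ⟫ = 0 := by rw [real_inner_comm]; exact hξw
    have hwv : ⟪w, v⟫ = 0 := by rw [real_inner_comm]; exact hvw
    have hvv : ⟪v, v⟫ = 1 - c ^ 2 := by
      have hsplit : ⟪v, v⟫ = ⟪η, v⟫ - c * ⟪ξ, v⟫ := by
        conv_lhs => rw [hvdef, inner_sub_left, real_inner_smul_left]
      rw [hsplit, hηv, hξv]; ring
    have hww : ⟪w, w⟫ = (1 : ℝ) := by
      rw [real_inner_self_eq_norm_sq, hwnorm]; norm_num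
    have hinner : ⟪c • ξ + Real.cos θ • v + (s * Real.sin θ) • w,
        c • ξ + Real.cos θ • v + (s * Real.sin θ) • w⟫ = (1 : ℝ) := by
      simp only [inner_add_left, inner_add_right, real_inner_smul_left,
        real_inner_smul_right, hξξ, hξv, hξw, hvξ, hwξ, hvw, hwv, hvv, hww]
      have hsc := Real.sin_sq_add_cos_sq θ
      nlinarith [hs2]
    have hn : ‖c • ξ + Real.cos θ • v + (s * Real.sin θ) • w‖ ^ 2 = 1 := by
      rw [← real_inner_self_eq_norm_sq, hinner]
    calc ‖c • ξ + Real.cos θ • v + (s * Real.sin θ) • w‖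
        = Real.sqrt (‖c • ξ + Real.cos θ • v + (s * Real.sin θ) • w‖ ^ 2) :=
          (Real.sqrt_sq (norm_nonneg _)).symm
      _ = 1 := by rw [hn, Real.sqrt_one]
  · simp only [inner_add_right, real_inner_smul_right, hξξ, hξv, hξw]
    ring
  · simp only [inner_add_right, real_inner_smul_right, hηξ, hηv, hηw]
    rw [hθ, htdef]
    field_simp
    ring
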